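/- For every ε > 0, every T > 0 and every bounded set B ⊆ H_0 there exists K ∈ ℕ such that for all n ≥ K and all u ∈ B: ∫_0^T ‖ e^{−A_n t} Q_m^n (j_n u) − j_n ( e^{−A_0 t} Q_m^0 u ) ‖ dt < ε. (This is the paper's Lemma 3.4: the linear semigroups on the orthogonal complements of the first m modes become uniformly close along the sequence, in integrated form on [0,T], uniformly over bounded sets.) -/

import Mathlib

open MeasureTheory Filter RealInnerProductSpace

set_option linter.unusedSectionVars false
set_option linter.unusedVariables false
set_option linter.deprecated false

section Helpers
variable {E : Type*} [NormedAddCommGroup E] [InnerProductSpace ℝ E] [CompleteSpace E]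

lemma my_exp_lip {x y : ℝ} (hx : 0 ≤ x) (hy : 0 ≤ y) :
    |Real.exp (-x) - Real.exp (-y)| ≤ |x - y| := by
  wlog h : x ≤ y generalizing x y
  · rw [abs_sub_comm, abs_sub_comm x y]; exact this hy hx (le_of_not_ge h)
  have ha : Real.exp (-x) ≤ 1 := Real.exp_le_one_iff.mpr (by linarith)
  have hb : (x - y) + 1 ≤ Real.exp (x - y) := Real.add_one_le_exp _
  have hc : Real.exp (-x) * Real.exp (x - y) = Real.exp (-y) := by
    rw [← Real.exp_add]; ring_nf
  have hd : 0 < Real.exp (-x) := Real.exp_pos _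
  have he : 0 < Real.exp (-y) := Real.exp_pos _
  rw [abs_sub_comm x y, abs_of_nonneg (by linarith : (0:ℝ) ≤ y - x)]
  have hf : Real.exp (-y) ≤ Real.exp (-x) := Real.exp_le_exp.mpr (by linarith)
  rw [abs_le]
  constructor
  · nlinarith
  · nlinarith

lemma my_hilbert_sum (φ : HilbertBasis ℕ ℝ E) {c : ℕ → ℝ}
    (hc : Summable fun i => c i ^ 2) :
    Summable (fun i => c i • (φ i : E)) ∧ ‖∑' i, c i • (φ i : E)‖ ^ 2 = ∑' i, c i ^ 2 := by
  have hmem : Memℓp c 2 := by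
    apply memℓp_gen
    simpa [Real.rpow_natCast] using hc
  set f : lp (fun _ : ℕ => ℝ) 2 := ⟨c, hmem⟩ with hf
  have hs : HasSum (fun i => c i • (φ i : E)) (φ.repr.symm f) := φ.hasSum_repr_symm f
  have hnorm : ‖φ.repr.symm f‖ = ‖f‖ := φ.repr.symm.norm_map f
  refine ⟨hs.summable, ?_⟩
  rw [hs.tsum_eq, hnorm]
  have h1 := lp.norm_rpow_eq_tsum (p := 2) (by norm_num) f
  have h2 : ‖f‖ ^ (2:ℕ) = ‖f‖ ^ ENNReal.toReal 2 := by
    simp [Real.rpow_natCast]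
  rw [h2, h1]
  congr 1; ext i
  have h3 : ‖f i‖ = |c i| := rfl
  simp [h3, Real.rpow_natCast, sq_abs]

lemma my_parseval (φ : HilbertBasis ℕ ℝ E) (w : E) :
    Summable (fun i => ⟪w, φ i⟫ ^ 2) ∧ (∑' i, ⟪w, φ i⟫ ^ 2) = ‖w‖ ^ 2 := by
  constructor
  · have h := φ.orthonormal.inner_products_summable (x := w)
    convert h using 2 with i
    rw [real_inner_comm]
    simp [sq_abs]
  · have h := φ.tsum_inner_mul_inner w w
    have h2 : ∀ i, ⟪w, φ i⟫ * ⟪φ i, w⟫ = ⟪w, φ i⟫ ^ 2 := by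
      intro i; rw [real_inner_comm w (φ i)]; ring
    rw [← real_inner_self_eq_norm_sq, ← h]
    exact (tsum_congr h2).symm
end Helpers

section Helpers2
variable {E : Type*} [NormedAddCommGroup E] [InnerProductSpace ℝ E] [CompleteSpace E]

lemma my_tail_bound (φ : HilbertBasis ℕ ℝ E) (w : E) {c : ℕ → ℝ} {a : ℝ} (ha : 0 ≤ a)
    (hb : ∀ i, |c i| ≤ a * |⟪w, φ i⟫|) :
    Summable (fun i => c i • (φ i : E)) ∧ ‖∑' i, c i • (φ i : E)‖ ≤ a * ‖w‖ := by
  obtain ⟨hw, hwsum⟩ := my_parseval φ w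
  have hc : Summable fun i => c i ^ 2 := by
    apply Summable.of_nonneg_of_le (fun i => sq_nonneg _) (fun i => ?_) (hw.mul_left (a^2))
    have h1 := hb i
    have h2 : c i ^ 2 ≤ (a * |⟪w, φ i⟫|) ^ 2 := by
      rw [← sq_abs (c i)]
      exact pow_le_pow_left₀ (abs_nonneg _) h1 2
    calc c i ^ 2 ≤ (a * |⟪w, φ i⟫|) ^ 2 := h2
      _ = a ^ 2 * ⟪w, φ i⟫ ^ 2 := by rw [mul_pow, sq_abs]
  obtain ⟨hsum, hnorm⟩ := my_hilbert_sum φ hc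
  refine ⟨hsum, ?_⟩
  have h1 : ‖∑' i, c i • (φ i : E)‖ ^ 2 ≤ (a * ‖w‖) ^ 2 := by
    rw [hnorm, mul_pow, ← hwsum, ← tsum_mul_left]
    refine Summable.tsum_le_tsum (fun i => ?_) hc (hw.mul_left _)
    calc c i ^ 2 ≤ (a * |⟪w, φ i⟫|) ^ 2 := by
          rw [← sq_abs (c i)]; exact pow_le_pow_left₀ (abs_nonneg _) (hb i) 2
      _ = a ^ 2 * ⟪w, φ i⟫ ^ 2 := by rw [mul_pow, sq_abs]
  nlinarith [norm_nonneg (∑' i, c i • (φ i : E)), mul_nonneg ha (norm_nonneg w)]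
end Helpers2


lemma my_int_exp {l T : ℝ} (hl : 0 < l) (hT : 0 ≤ T) :
    ∫ t in (0:ℝ)..T, Real.exp (-l * t) ≤ 1 / l := by
  have h := intervalIntegral.integral_comp_mul_left (a := (0:ℝ)) (b := T)
    (f := Real.exp) (c := -l) (by linarith)
  simp only [mul_zero, smul_eq_mul] at h
  rw [h, integral_exp]
  have h1 : Real.exp (-l * T) ≤ 1 := Real.exp_le_one_iff.mpr (by nlinarith)
  have h2 : (0:ℝ) < Real.exp (-l * T) := Real.exp_pos _
  rw [Real.exp_zero]
  rw [div_eq_mul_inv, one_mul]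
  have : (-l)⁻¹ * (Real.exp (-l*T) - 1) = (1 - Real.exp (-l*T)) * l⁻¹ := by
    have : l ≠ 0 := ne_of_gt hl
    rw [inv_neg, neg_mul, neg_eq_iff_eq_neg]
    ring
  rw [this]
  have hinv : 0 < l⁻¹ := by positivity
  nlinarith


lemma my_term_bound {H0 E : Type*} [NormedAddCommGroup H0] [InnerProductSpace ℝ H0]
    [CompleteSpace H0] [NormedAddCommGroup E] [InnerProductSpace ℝ E] [CompleteSpace E]
    (j : H0 →L[ℝ] E) (hj : ‖j‖ ≤ 2) (φa : E) (φb : H0) (hφa : ‖φa‖ = 1) (hφb : ‖φb‖ = 1)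
    {l1 l0 t T R : ℝ} (hl1 : 0 < l1) (hl0 : 0 < l0) (ht0 : 0 ≤ t) (htT : t ≤ T)
    (u : H0) (hu : ‖u‖ ≤ R) (hR : 0 < R) :
    ‖(Real.exp (-l1 * t) * ⟪j u, φa⟫) • φa - (Real.exp (-l0 * t) * ⟪u, φb⟫) • j φb‖
    ≤ 2*R*T*|l1 - l0| + R*‖(ContinuousLinearMap.adjoint j) φa - φb‖ + R*‖j φb - φa‖ := by
  have hT0 : 0 ≤ T := le_trans ht0 htT
  set e1 := Real.exp (-l1 * t) with he1_def
  set e2 := Real.exp (-l0 * t) with he2_def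
  set p : ℝ := ⟪j u, φa⟫ with hp_def
  set q : ℝ := ⟪u, φb⟫ with hq_def
  have hju : ‖j u‖ ≤ 2 * R := by
    calc ‖j u‖ ≤ ‖j‖ * ‖u‖ := j.le_opNorm u
      _ ≤ 2 * R := mul_le_mul hj hu (norm_nonneg u) (by norm_num)
  have key : (e1 * p) • φa - (e2 * q) • j φb
      = (e1*p - e2*q) • φa + (e2*q) • (φa - j φb) := by
    rw [sub_smul, smul_sub]; abel
  rw [key]
  have hne : ‖(e1*p - e2*q) • φa + (e2*q) • (φa - j φb)‖
      ≤ |e1*p - e2*q| + |e2*q| * ‖j φb - φa‖ := by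
    refine le_trans (norm_add_le _ _) ?_
    rw [norm_smul, norm_smul, hφa, Real.norm_eq_abs, Real.norm_eq_abs, mul_one,
      norm_sub_rev]
  refine le_trans hne ?_
  have he12 : |e1 - e2| ≤ T * |l1 - l0| := by
    have h1 := my_exp_lip (mul_nonneg hl1.le ht0) (mul_nonneg hl0.le ht0)
    rw [← neg_mul, ← neg_mul] at h1
    calc |e1 - e2| ≤ |l1 * t - l0 * t| := h1
      _ = |l1 - l0| * t := by rw [← sub_mul, abs_mul, abs_of_nonneg ht0]
      _ ≤ |l1 - l0| * T := mul_le_mul_of_nonneg_left htT (abs_nonneg _)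
      _ = T * |l1 - l0| := mul_comm _ _
  have hp : |p| ≤ 2*R := by
    calc |p| ≤ ‖j u‖ * ‖φa‖ := abs_real_inner_le_norm _ _
      _ = ‖j u‖ := by rw [hφa, mul_one]
      _ ≤ 2*R := hju
  have hq : |q| ≤ R := by
    calc |q| ≤ ‖u‖ * ‖φb‖ := abs_real_inner_le_norm _ _
      _ = ‖u‖ := by rw [hφb, mul_one]
      _ ≤ R := hu
  have hpq : |p - q| ≤ R * ‖(ContinuousLinearMap.adjoint j) φa - φb‖ := by
    have hadj : p = ⟪u, (ContinuousLinearMap.adjoint j) φa⟫ :=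
      (ContinuousLinearMap.adjoint_inner_right j u φa).symm
    have h2 : p - q = ⟪u, (ContinuousLinearMap.adjoint j) φa - φb⟫ := by
      rw [inner_sub_right, hadj, hq_def]
    rw [h2]
    calc |⟪u, (ContinuousLinearMap.adjoint j) φa - φb⟫|
        ≤ ‖u‖ * ‖(ContinuousLinearMap.adjoint j) φa - φb‖ := abs_real_inner_le_norm _ _
      _ ≤ R * ‖(ContinuousLinearMap.adjoint j) φa - φb‖ :=
          mul_le_mul_of_nonneg_right hu (norm_nonneg _)
  have he2 : e2 ≤ 1 := Real.exp_le_one_iff.mpr (by nlinarith)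
  have he2' : (0:ℝ) ≤ e2 := Real.exp_nonneg _
  have habd : |e1*p - e2*q| ≤ T * |l1 - l0| * (2*R)
      + R * ‖(ContinuousLinearMap.adjoint j) φa - φb‖ := by
    have h1 : e1*p - e2*q = (e1 - e2)*p + e2*(p - q) := by ring
    rw [h1]
    refine le_trans (abs_add_le _ _) ?_
    rw [abs_mul, abs_mul, abs_of_nonneg he2']
    have h2 : |e1 - e2| * |p| ≤ T * |l1 - l0| * (2*R) :=
      mul_le_mul he12 hp (abs_nonneg _) (by positivity)
    have h3 : e2 * |p - q| ≤ 1 * (R * ‖(ContinuousLinearMap.adjoint j) φa - φb‖) :=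
      mul_le_mul he2 hpq (abs_nonneg _) (by norm_num)
    linarith
  have hb2 : |e2*q| * ‖j φb - φa‖ ≤ R * ‖j φb - φa‖ := by
    apply mul_le_mul_of_nonneg_right _ (norm_nonneg _)
    rw [abs_mul, abs_of_nonneg he2']
    calc e2 * |q| ≤ 1 * R := mul_le_mul he2 hq (abs_nonneg _) (by norm_num)
      _ = R := one_mul R
  have hr : T * |l1 - l0| * (2*R) = 2*R*T*|l1 - l0| := by ring
  linarith

lemma my_pointwise {H0 E : Type*} [NormedAddCommGroup H0] [InnerProductSpace ℝ H0]
    [CompleteSpace H0] [NormedAddCommGroup E] [InnerProductSpace ℝ E] [CompleteSpace E]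
    (φ0 : HilbertBasis ℕ ℝ H0) (φ1 : HilbertBasis ℕ ℝ E)
    (lam0 lam1 : ℕ → ℝ) (hl0pos : ∀ i, 0 < lam0 i) (hl0mono : Monotone lam0)
    (hl1pos : ∀ i, 0 < lam1 i) (hl1mono : Monotone lam1)
    (j : H0 →L[ℝ] E) (hj : ‖j‖ ≤ 2) (m N : ℕ) (R T : ℝ) (hR : 0 < R)
    (u : H0) (hu : ‖u‖ ≤ R) (t : ℝ) (ht0 : 0 ≤ t) (htT : t ≤ T) :
    ‖(∑' i, (if m ≤ i then Real.exp (-(lam1 i) * t) * ⟪j u, φ1 i⟫ else 0) • (φ1 i : E))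
      - j (∑' i, (if m ≤ i then Real.exp (-(lam0 i) * t) * ⟪u, φ0 i⟫ else 0) • (φ0 i : H0))‖
    ≤ (∑ i ∈ Finset.range N, (2*R*T*|lam1 i - lam0 i|
        + R*‖(ContinuousLinearMap.adjoint j) (φ1 i) - φ0 i‖ + R*‖j (φ0 i) - φ1 i‖))
      + 2*R*Real.exp (-(lam1 N)*t) + 2*R*Real.exp (-(lam0 N)*t) := by
  have hT0 : 0 ≤ T := le_trans ht0 htT
  set a : ℕ → ℝ := fun i => if m ≤ i then Real.exp (-(lam1 i) * t) * ⟪j u, φ1 i⟫ else 0 with ha_def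
  set b : ℕ → ℝ := fun i => if m ≤ i then Real.exp (-(lam0 i) * t) * ⟪u, φ0 i⟫ else 0 with hb_def
  set al : ℕ → ℝ := fun i => if i < N then a i else 0 with hal_def
  set ah : ℕ → ℝ := fun i => if N ≤ i then a i else 0 with hah_def
  set bl : ℕ → ℝ := fun i => if i < N then b i else 0 with hbl_def
  set bh : ℕ → ℝ := fun i => if N ≤ i then b i else 0 with hbh_def
  have hju : ‖j u‖ ≤ 2 * R := by
    calc ‖j u‖ ≤ ‖j‖ * ‖u‖ := j.le_opNorm u
      _ ≤ 2 * R := mul_le_mul hj hu (norm_nonneg u) (by norm_num)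
  have hahigh : ∀ i, |ah i| ≤ Real.exp (-(lam1 N)*t) * |⟪j u, φ1 i⟫| := by
    intro i
    by_cases hiN : N ≤ i
    · simp only [hah_def, if_pos hiN, ha_def]
      by_cases him : m ≤ i
      · simp only [if_pos him, abs_mul, Real.abs_exp]
        apply mul_le_mul_of_nonneg_right _ (abs_nonneg _)
        apply Real.exp_le_exp.mpr
        have := mul_le_mul_of_nonneg_right (hl1mono hiN) ht0
        rw [neg_mul, neg_mul]
        linarith
      · simp only [if_neg him, abs_zero]; positivity
    · simp only [hah_def, if_neg hiN, abs_zero]; positivity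
  have hbhigh : ∀ i, |bh i| ≤ Real.exp (-(lam0 N)*t) * |⟪u, φ0 i⟫| := by
    intro i
    by_cases hiN : N ≤ i
    · simp only [hbh_def, if_pos hiN, hb_def]
      by_cases him : m ≤ i
      · simp only [if_pos him, abs_mul, Real.abs_exp]
        apply mul_le_mul_of_nonneg_right _ (abs_nonneg _)
        apply Real.exp_le_exp.mpr
        have := mul_le_mul_of_nonneg_right (hl0mono hiN) ht0
        rw [neg_mul, neg_mul]
        linarith
      · simp only [if_neg him, abs_zero]; positivity
    · simp only [hbh_def, if_neg hiN, abs_zero]; positivity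
  obtain ⟨hsumah, hnormah⟩ := my_tail_bound φ1 (j u) (Real.exp_nonneg _) hahigh
  obtain ⟨hsumbh, hnormbh⟩ := my_tail_bound φ0 u (Real.exp_nonneg _) hbhigh
  have hsumal : Summable (fun i => al i • (φ1 i : E)) := by
    apply summable_of_ne_finset_zero (s := Finset.range N)
    intro i hi
    have h : ¬ i < N := fun h => hi (Finset.mem_range.mpr h)
    simp [hal_def, h]
  have hsumbl : Summable (fun i => bl i • (φ0 i : H0)) := by
    apply summable_of_ne_finset_zero (s := Finset.range N)
    intro i hi
    have h : ¬ i < N := fun h => hi (Finset.mem_range.mpr h)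
    simp [hbl_def, h]
  have hta : (∑' i, a i • (φ1 i : E))
      = (∑ i ∈ Finset.range N, al i • (φ1 i : E)) + ∑' i, ah i • (φ1 i : E) := by
    have h1 : ∀ i, a i • (φ1 i : E) = al i • (φ1 i : E) + ah i • (φ1 i : E) := by
      intro i
      by_cases hiN : i < N
      · simp [hal_def, hah_def, hiN, not_le.mpr hiN]
      · simp [hal_def, hah_def, hiN, not_lt.mp hiN]
    rw [tsum_congr h1, Summable.tsum_add hsumal hsumah]
    congr 1
    apply tsum_eq_sum
    intro i hi
    have h : ¬ i < N := fun h => hi (Finset.mem_range.mpr h)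
    simp [hal_def, h]
  have htb : (∑' i, b i • (φ0 i : H0))
      = (∑ i ∈ Finset.range N, bl i • (φ0 i : H0)) + ∑' i, bh i • (φ0 i : H0) := by
    have h1 : ∀ i, b i • (φ0 i : H0) = bl i • (φ0 i : H0) + bh i • (φ0 i : H0) := by
      intro i
      by_cases hiN : i < N
      · simp [hbl_def, hbh_def, hiN, not_le.mpr hiN]
      · simp [hbl_def, hbh_def, hiN, not_lt.mp hiN]
    rw [tsum_congr h1, Summable.tsum_add hsumbl hsumbh]
    congr 1
    apply tsum_eq_sum
    intro i hi
    have h : ¬ i < N := fun h => hi (Finset.mem_range.mpr h)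
    simp [hbl_def, h]
  rw [hta, htb, map_add]
  have hjlow : j (∑ i ∈ Finset.range N, bl i • (φ0 i : H0))
      = ∑ i ∈ Finset.range N, bl i • j (φ0 i) := by
    rw [map_sum]; exact Finset.sum_congr rfl fun i _ => j.map_smul _ _
  rw [hjlow]
  set X := ∑ i ∈ Finset.range N, al i • (φ1 i : E) with hX
  set L := ∑ i ∈ Finset.range N, bl i • j (φ0 i) with hL
  set Pn := ∑' i, ah i • (φ1 i : E) with hPn_def
  set P0 := ∑' i, bh i • (φ0 i : H0) with hP0_def
  have tri : ‖X + Pn - (L + j P0)‖ ≤ ‖X - L‖ + ‖Pn‖ + ‖j P0‖ := by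
    have h1 : X + Pn - (L + j P0) = (X - L) + Pn - j P0 := by abel
    rw [h1]
    calc ‖(X - L) + Pn - j P0‖ ≤ ‖(X - L) + Pn‖ + ‖j P0‖ := norm_sub_le _ _
      _ ≤ ‖X - L‖ + ‖Pn‖ + ‖j P0‖ := by
          have := norm_add_le (X - L) Pn; linarith
  refine le_trans tri ?_
  have hPn : ‖Pn‖ ≤ 2*R*Real.exp (-(lam1 N)*t) := by
    refine le_trans hnormah ?_
    calc Real.exp (-(lam1 N)*t) * ‖j u‖ ≤ Real.exp (-(lam1 N)*t) * (2*R) :=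
          mul_le_mul_of_nonneg_left hju (Real.exp_nonneg _)
      _ = 2*R*Real.exp (-(lam1 N)*t) := by ring
  have hP0 : ‖j P0‖ ≤ 2*R*Real.exp (-(lam0 N)*t) := by
    calc ‖j P0‖ ≤ ‖j‖ * ‖P0‖ := j.le_opNorm _
      _ ≤ 2 * (Real.exp (-(lam0 N)*t) * R) := by
          apply mul_le_mul hj _ (norm_nonneg _) (by norm_num)
          exact le_trans hnormbh (mul_le_mul_of_nonneg_left hu (Real.exp_nonneg _))
      _ = 2*R*Real.exp (-(lam0 N)*t) := by ring
  have hXL : ‖X - L‖ ≤ ∑ i ∈ Finset.range N, (2*R*T*|lam1 i - lam0 i|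
      + R*‖(ContinuousLinearMap.adjoint j) (φ1 i) - φ0 i‖ + R*‖j (φ0 i) - φ1 i‖) := by
    rw [show X - L = ∑ i ∈ Finset.range N, (al i • (φ1 i : E) - bl i • j (φ0 i)) from
      (Finset.sum_sub_distrib _ _).symm]
    refine le_trans (norm_sum_le _ _) (Finset.sum_le_sum ?_)
    intro i hi
    have hiN : i < N := Finset.mem_range.mp hi
    by_cases him : m ≤ i
    · have hal_i : al i = Real.exp (-(lam1 i) * t) * ⟪j u, φ1 i⟫ := by
        simp only [hal_def, ha_def]
        rw [if_pos hiN, if_pos him]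
      have hbl_i : bl i = Real.exp (-(lam0 i) * t) * ⟪u, φ0 i⟫ := by
        simp only [hbl_def, hb_def]
        rw [if_pos hiN, if_pos him]
      rw [hal_i, hbl_i]
      exact my_term_bound j hj (φ1 i) (φ0 i) (φ1.orthonormal.1 i) (φ0.orthonormal.1 i)
        (hl1pos i) (hl0pos i) ht0 htT u hu hR
    · have h0 : al i • (φ1 i : E) - bl i • j (φ0 i) = 0 := by
        simp [hal_def, hbl_def, ha_def, hb_def, him]
      rw [h0, norm_zero]
      positivity
  linarith


theorem stmt3 {H0 : Type*} [NormedAddCommGroup H0] [InnerProductSpace ℝ H0]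
    [CompleteSpace H0]
    (Hn : ℕ → Type*) [∀ n, NormedAddCommGroup (Hn n)] [∀ n, InnerProductSpace ℝ (Hn n)]
    [∀ n, CompleteSpace (Hn n)]
    (φ0 : HilbertBasis ℕ ℝ H0) (φn : ∀ n, HilbertBasis ℕ ℝ (Hn n))
    (lam0 : ℕ → ℝ) (lamn : ℕ → ℕ → ℝ)
    (hlam0pos : ∀ i, 0 < lam0 i) (hlam0mono : Monotone lam0)
    (hlam0top : Tendsto lam0 atTop atTop)
    (hlamnpos : ∀ n i, 0 < lamn n i) (hlamnmono : ∀ n, Monotone (lamn n))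
    (jn : ∀ n, H0 →L[ℝ] Hn n) (hjn : ∀ n, ‖jn n‖ ≤ 2)
    (hlamconv : ∀ i, Tendsto (fun n => lamn n i) atTop (nhds (lam0 i)))
    (hφconv : ∀ i, Tendsto (fun n => ‖jn n (φ0 i) - φn n i‖) atTop (nhds 0))
    (hφadjconv : ∀ i,
      Tendsto (fun n => ‖ContinuousLinearMap.adjoint (jn n) (φn n i) - φ0 i‖)
        atTop (nhds 0))
    (m : ℕ) :
    ∀ ε : ℝ, 0 < ε → ∀ T : ℝ, 0 < T → ∀ B : Set H0, Bornology.IsBounded B →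
      ∃ K : ℕ, ∀ n ≥ K, ∀ u ∈ B,
        (∫ t in (0:ℝ)..T,
          ‖(∑' i : ℕ, if m ≤ i then
              (Real.exp (-(lamn n i) * t) * ⟪jn n u, φn n i⟫) • (φn n i : Hn n) else 0)
            - jn n (∑' i : ℕ, if m ≤ i then
              (Real.exp (-(lam0 i) * t) * ⟪u, φ0 i⟫) • (φ0 i : H0) else 0)‖) < ε := by
  intro ε hε T hT B hB
  obtain ⟨R0, hR0⟩ := hB.exists_norm_le
  set R := max R0 1 with hR_def
  have hR1 : (1:ℝ) ≤ R := le_max_right _ _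
  have hRpos : (0:ℝ) < R := lt_of_lt_of_le one_pos hR1
  have hRu : ∀ u ∈ B, ‖u‖ ≤ R := fun u hu => le_trans (hR0 u hu) (le_max_left _ _)
  obtain ⟨N, hNlam⟩ := (hlam0top.eventually_ge_atTop (16*R/ε)).exists
  have hl0Npos : 0 < lam0 N := hlam0pos N
  set Cs : ℕ → ℝ := fun n => ∑ i ∈ Finset.range N, (2*R*T*|lamn n i - lam0 i|
      + R*‖(ContinuousLinearMap.adjoint (jn n)) (φn n i) - φ0 i‖
      + R*‖jn n (φ0 i) - φn n i‖) with hCs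
  have hCconv : Tendsto Cs atTop (nhds 0) := by
    have h0 : ∀ i : ℕ, Tendsto (fun n => 2*R*T*|lamn n i - lam0 i|
        + R*‖(ContinuousLinearMap.adjoint (jn n)) (φn n i) - φ0 i‖
        + R*‖jn n (φ0 i) - φn n i‖) atTop (nhds 0) := by
      intro i
      have h1 : Tendsto (fun n => |lamn n i - lam0 i|) atTop (nhds 0) := by
        have := ((hlamconv i).sub_const (lam0 i)).abs
        simpa using this
      have := ((h1.const_mul (2*R*T)).add ((hφadjconv i).const_mul R)).add
        ((hφconv i).const_mul R)
      simpa using this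
    have := tendsto_finset_sum (Finset.range N) (fun i (_ : i ∈ Finset.range N) => h0 i)
    simpa [hCs] using this
  have hquarter : (0:ℝ) < ε/(4*T) := by positivity
  have hev1 : ∀ᶠ n in atTop, Cs n < ε/(4*T) := hCconv.eventually_lt_const hquarter
  have hev2 : ∀ᶠ n in atTop, lam0 N / 2 < lamn n N :=
    (hlamconv N).eventually (eventually_gt_nhds (by linarith))
  obtain ⟨K, hK⟩ := eventually_atTop.mp (hev1.and hev2)
  refine ⟨K, fun n hn u hu => ?_⟩
  obtain ⟨hCs_n, hlam_n⟩ := hK n hn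
  have hlamNn : 0 < lamn n N := hlamnpos n N
  set F : ℝ → ℝ := fun t =>
    ‖(∑' i : ℕ, if m ≤ i then
        (Real.exp (-(lamn n i) * t) * ⟪jn n u, φn n i⟫) • (φn n i : Hn n) else 0)
      - jn n (∑' i : ℕ, if m ≤ i then
        (Real.exp (-(lam0 i) * t) * ⟪u, φ0 i⟫) • (φ0 i : H0) else 0)‖ with hF
  show ∫ t in (0:ℝ)..T, F t < ε
  set g : ℝ → ℝ := fun t => Cs n + 2*R*Real.exp (-(lamn n N)*t)
    + 2*R*Real.exp (-(lam0 N)*t) with hg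
  have hpt : ∀ t ∈ Set.Icc (0:ℝ) T, F t ≤ g t := by
    intro t ht
    have hrw1 : (∑' i : ℕ, if m ≤ i then
        (Real.exp (-(lamn n i) * t) * ⟪jn n u, φn n i⟫) • (φn n i : Hn n) else 0)
        = ∑' i : ℕ, (if m ≤ i then
          Real.exp (-(lamn n i) * t) * ⟪jn n u, φn n i⟫ else 0) • (φn n i : Hn n) :=
      tsum_congr fun i => by split_ifs <;> simp
    have hrw0 : (∑' i : ℕ, if m ≤ i then
        (Real.exp (-(lam0 i) * t) * ⟪u, φ0 i⟫) • (φ0 i : H0) else 0)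
        = ∑' i : ℕ, (if m ≤ i then
          Real.exp (-(lam0 i) * t) * ⟪u, φ0 i⟫ else 0) • (φ0 i : H0) :=
      tsum_congr fun i => by split_ifs <;> simp
    rw [hF]
    simp only [hrw1, hrw0]
    exact my_pointwise φ0 (φn n) lam0 (lamn n) hlam0pos hlam0mono (hlamnpos n)
      (hlamnmono n) (jn n) (hjn n) m N R T hRpos u (hRu u hu) t ht.1 ht.2
  have hce1 : Continuous fun t : ℝ => Real.exp (-(lamn n N)*t) := by fun_prop
  have hce2 : Continuous fun t : ℝ => Real.exp (-(lam0 N)*t) := by fun_prop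
  have hgcont : Continuous g := by
    rw [hg]; fun_prop
  have hgint : IntervalIntegrable g volume 0 T := hgcont.intervalIntegrable _ _
  have hIg : (∫ t in (0:ℝ)..T, g t) ≤ Cs n * T + 2*R*(1/(lamn n N)) + 2*R*(1/(lam0 N)) := by
    have i1 : IntervalIntegrable (fun _ : ℝ => Cs n) volume 0 T :=
      intervalIntegrable_const
    have i2 : IntervalIntegrable (fun t : ℝ => 2*R*Real.exp (-(lamn n N)*t)) volume 0 T :=
      (continuous_const.mul hce1).intervalIntegrable _ _
    have i3 : IntervalIntegrable (fun t : ℝ => 2*R*Real.exp (-(lam0 N)*t)) volume 0 T :=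
      (continuous_const.mul hce2).intervalIntegrable _ _
    have hsplit : (∫ t in (0:ℝ)..T, g t)
        = (∫ _t in (0:ℝ)..T, Cs n) + (∫ t in (0:ℝ)..T, 2*R*Real.exp (-(lamn n N)*t))
          + ∫ t in (0:ℝ)..T, 2*R*Real.exp (-(lam0 N)*t) := by
      rw [hg, intervalIntegral.integral_add (i1.add i2) i3,
        intervalIntegral.integral_add i1 i2]
    rw [hsplit, intervalIntegral.integral_const]
    have e1 : (∫ t in (0:ℝ)..T, 2*R*Real.exp (-(lamn n N)*t)) ≤ 2*R*(1/(lamn n N)) := by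
      rw [intervalIntegral.integral_const_mul]
      exact mul_le_mul_of_nonneg_left (my_int_exp hlamNn hT.le) (by positivity)
    have e2 : (∫ t in (0:ℝ)..T, 2*R*Real.exp (-(lam0 N)*t)) ≤ 2*R*(1/(lam0 N)) := by
      rw [intervalIntegral.integral_const_mul]
      exact mul_le_mul_of_nonneg_left (my_int_exp hl0Npos hT.le) (by positivity)
    have : (T - 0) • Cs n = Cs n * T := by rw [smul_eq_mul]; ring
    rw [this]
    linarith
  -- numeric bounds
  have h1 : Cs n * T < ε/4 := by
    have := mul_lt_mul_of_pos_right hCs_n hT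
    calc Cs n * T < ε/(4*T) * T := this
      _ = ε/4 := by field_simp
  have h2 : 2*R*(1/(lamn n N)) ≤ ε/4 := by
    have hx : 8*R/ε < lamn n N := by
      have : 8*R/ε ≤ lam0 N / 2 := by
        rw [div_le_div_iff₀ hε (by norm_num)]
        rw [div_le_iff₀ hε] at hNlam
        linarith
      linarith
    have hx8 : 8*R < lamn n N * ε := by
      rw [div_lt_iff₀ hε] at hx; linarith
    rw [mul_one_div, div_le_div_iff₀ hlamNn (by norm_num : (0:ℝ) < 4)]
    nlinarith
  have h3 : 2*R*(1/(lam0 N)) ≤ ε/8 := by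
    have hx16 : 16*R ≤ lam0 N * ε := by
      rw [div_le_iff₀ hε] at hNlam; linarith
    rw [mul_one_div, div_le_div_iff₀ hl0Npos (by norm_num : (0:ℝ) < 8)]
    nlinarith
  by_cases hD : IntervalIntegrable F volume 0 T
  · have hle : (∫ t in (0:ℝ)..T, F t) ≤ ∫ t in (0:ℝ)..T, g t :=
      intervalIntegral.integral_mono_on hT.le hD hgint hpt
    linarith
  · rw [intervalIntegral.integral_undef hD]
    linarith
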